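/- The Sorgenfrey line (the real line with the topology generated by half-open intervals [a, b)) is a strong PP-space. Concretely: for every dense set D in the Sorgenfrey line there exist a sequence of locally finite partitions of unity ((φ_{i,n})_{i∈I_n})_{n∈ℕ} on the Sorgenfrey line and families (x_{i,n})_{i∈I_n} of points of D witnessing the strong PP property; such a witness is given by taking I_n = ℤ, φ_{i,n} the characteristic function of [(i−1)/n, i/n) and x_{i,n} any point of [i/n, (i+1)/n) ∩ D. -/

import Mathlib

open Set Function Filter Topology

universe u

/-- An *equiconnecting* map on `Z`: a map `λ : Z × Z × [0,1] → Z`, continuous on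
`Z × Z × [0,1]`, with `λ(x,y,0) = x`, `λ(x,y,1) = y` and `λ(x,x,t) = x`. -/
structure IsEquiconnecting {Z : Type*} [TopologicalSpace Z] (lam : Z → Z → ℝ → Z) : Prop where
  continuousOn : ContinuousOn (fun p : Z × Z × ℝ => lam p.1 p.2.1 p.2.2)
    (Set.univ ×ˢ Set.univ ×ˢ Set.Icc (0 : ℝ) 1)
  map_zero : ∀ x y : Z, lam x y 0 = x
  map_one : ∀ x y : Z, lam x y 1 = y
  map_diag : ∀ x : Z, ∀ t ∈ Set.Icc (0 : ℝ) 1, lam x x t = x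

/-- `lambdaIter lam n` is the map `λ_{n+1} : Z^{n+1} × S_{n+1} → Z` from the paper,
defined recursively. -/
noncomputable def lambdaIter {Z : Type*} (lam : Z → Z → ℝ → Z) :
    (n : ℕ) → (Fin (n + 1) → Z) → (Fin (n + 1) → ℝ) → Z
  | 0, x, _ => x 0
  | n + 1, x, a =>
      if 0 < a 0 + a 1 then
        lambdaIter lam n
          (Fin.cons (lam (x 0) (x 1) (a 1 / (a 0 + a 1))) fun i => x i.succ.succ)
          (Fin.cons (a 0 + a 1) fun i => a i.succ.succ)
      else
        lambdaIter lam n (fun i => x i.succ) fun i => a i.succ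

/-- `lambdaIterSet lam A n` is the set `λ^n(A)`:  `λ^0(A) = A` and
`λ^{n+1}(A) = λ(λ^n(A) × A × [0,1])`. -/
def lambdaIterSet {Z : Type*} (lam : Z → Z → ℝ → Z) (A : Set Z) : ℕ → Set Z
  | 0 => A
  | n + 1 => (fun p : Z × Z × ℝ => lam p.1 p.2.1 p.2.2) ''
      (lambdaIterSet lam A n ×ˢ A ×ˢ Set.Icc (0 : ℝ) 1)

/-- `λ^∞(A) = ⋃_{n ≥ 1} λ^n(A)`. -/
def lambdaInftySet {Z : Type*} (lam : Z → Z → ℝ → Z) (A : Set Z) : Set Z :=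
  ⋃ n : ℕ, lambdaIterSet lam A (n + 1)

/-- An equiconnected space `(Z, λ)` is locally convex if every point has arbitrarily small
neighborhoods `V` with `λ^∞(V)` inside a given neighborhood. -/
def IsLocallyConvexEquiconnected {Z : Type*} [TopologicalSpace Z] (lam : Z → Z → ℝ → Z) :
    Prop :=
  ∀ z : Z, ∀ U ∈ nhds z, ∃ V ∈ nhds z, lambdaInftySet lam V ⊆ U

/-- A map is Baire-one if it is the pointwise limit of a sequence of continuous maps. -/
def BaireOne {Y Z : Type*} [TopologicalSpace Y] [TopologicalSpace Z] (g : Y → Z) : Prop :=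
  ∃ h : ℕ → Y → Z, (∀ n, Continuous (h n)) ∧
    ∀ y, Filter.Tendsto (fun n => h n y) Filter.atTop (nhds (g y))

/-- A locally finite partition of unity on `X`: continuous `[0,1]`-valued functions whose
supports (closures of the sets where they are nonzero) form a locally finite family and whose
pointwise sum is `1`. -/
def IsLocFinPartitionOfUnity {I X : Type*} [TopologicalSpace X] (φ : I → X → ℝ) : Prop :=
  (∀ i, Continuous (φ i)) ∧ (∀ i x, φ i x ∈ Set.Icc (0 : ℝ) 1) ∧
    (LocallyFinite fun i => closure (Function.support (φ i))) ∧ ∀ x, ∑ᶠ i, φ i x = 1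

/-- A strong PP-space: for every dense `D ⊆ X` there are a sequence of locally finite
partitions of unity and families of points of `D` such that points attached to the supports
containing `x` converge to `x` uniformly in the index, in the sense of condition (3). -/
def IsStrongPPSpace (X : Type*) [TopologicalSpace X] : Prop :=
  ∀ D : Set X, Dense D →
    ∃ (I : ℕ → Type u) (φ : ∀ n, I n → X → ℝ) (p : ∀ n, I n → X),
      (∀ n, IsLocFinPartitionOfUnity (φ n)) ∧ (∀ n i, p n i ∈ D) ∧
      ∀ x : X, ∀ U ∈ nhds x, ∃ n₀ : ℕ, ∀ n ≥ n₀, ∀ i : I n,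
        x ∈ closure (Function.support (φ n i)) → p n i ∈ U

/-- A zero set: the preimage of `{0}` under a continuous function `X → [0,1]`. -/
def IsZeroSet {X : Type*} [TopologicalSpace X] (A : Set X) : Prop :=
  ∃ f : X → ℝ, Continuous f ∧ (∀ x, f x ∈ Set.Icc (0 : ℝ) 1) ∧ A = f ⁻¹' {0}

/-- A cozero set: the preimage of `(0,1]` under a continuous function `X → [0,1]`. -/
def IsCozeroSet {X : Type*} [TopologicalSpace X] (A : Set X) : Prop :=
  ∃ f : X → ℝ, Continuous f ∧ (∀ x, f x ∈ Set.Icc (0 : ℝ) 1) ∧ A = f ⁻¹' Set.Ioc (0 : ℝ) 1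

/-- A functionally ambiguous set: simultaneously a countable union of zero sets and a
countable intersection of cozero sets. -/
def IsFunctionallyAmbiguous {X : Type*} [TopologicalSpace X] (A : Set X) : Prop :=
  (∃ F : ℕ → Set X, (∀ n, IsZeroSet (F n)) ∧ A = ⋃ n, F n) ∧
    ∃ B : ℕ → Set X, (∀ n, IsCozeroSet (B n)) ∧ A = ⋂ n, B n

/-- A discrete family of sets: every point has a neighborhood meeting at most one member. -/
def IsDiscreteFamily {I X : Type*} [TopologicalSpace X] (A : I → Set X) : Prop :=
  ∀ x : X, ∃ U ∈ nhds x, {i : I | (U ∩ A i).Nonempty}.Subsingleton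

/-- Weakly collectionwise normal: every discrete family of zero sets can be separated by a
discrete family of cozero sets. -/
def WeaklyCollectionwiseNormal (X : Type*) [TopologicalSpace X] : Prop :=
  ∀ (S : Type u) (F : S → Set X), (∀ s, IsZeroSet (F s)) → IsDiscreteFamily F →
    ∃ U : S → Set X, (∀ s, IsCozeroSet (U s)) ∧ IsDiscreteFamily U ∧ ∀ s, F s ⊆ U s

/-- A contracting structure on `Z`: a continuous `γ : Z × [0,1] → Z` with `γ(z,0) = z` and
`γ(z,1) = z₀`. -/
structure IsContracting {Z : Type*} [TopologicalSpace Z] (γ : Z → ℝ → Z) (z₀ : Z) :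
    Prop where
  continuousOn : ContinuousOn (fun p : Z × ℝ => γ p.1 p.2) (Set.univ ×ˢ Set.Icc (0 : ℝ) 1)
  map_zero : ∀ z : Z, γ z 0 = z
  map_one : ∀ z : Z, γ z 1 = z₀

/-- The Sorgenfrey line: the reals with the topology generated by half-open
intervals `[a, b)`. -/
def SorgenfreyLine : Type := ℝ

noncomputable instance : Field SorgenfreyLine :=
  inferInstanceAs (Field ℝ)

noncomputable instance : LinearOrder SorgenfreyLine :=
  inferInstanceAs (LinearOrder ℝ)

instance : IsStrictOrderedRing SorgenfreyLine :=
  inferInstanceAs (IsStrictOrderedRing ℝ)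

instance : TopologicalSpace SorgenfreyLine :=
  TopologicalSpace.generateFrom {s : Set SorgenfreyLine | ∃ a b : SorgenfreyLine, s = Set.Ico a b}

/-- The characteristic function (with real values) of `[(i-1)/(n+1), i/(n+1))` on the
Sorgenfrey line; the paper's `φ_{i,n}` (with `n ≥ 1` reindexed to `n + 1`). -/
noncomputable def sorgenfreyWitness (n : ℕ) (i : ℤ) : SorgenfreyLine → ℝ :=
  Set.indicator (Set.Ico (((i : SorgenfreyLine) - 1) / (n + 1)) ((i : SorgenfreyLine) / (n + 1)))
    fun _ => (1 : ℝ)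
namespace SLAux

instance : Archimedean SorgenfreyLine := inferInstanceAs (Archimedean ℝ)
noncomputable instance : FloorRing SorgenfreyLine := inferInstanceAs (FloorRing ℝ)

theorem isOpen_Ico (a b : SorgenfreyLine) : IsOpen (Set.Ico a b) :=
  TopologicalSpace.GenerateOpen.basic _ ⟨a, b, rfl⟩

theorem isOpen_Ici (a : SorgenfreyLine) : IsOpen (Set.Ici a) :=
  Set.iUnion_Ico_right a ▸ isOpen_iUnion (isOpen_Ico a)

theorem isOpen_Iio (b : SorgenfreyLine) : IsOpen (Set.Iio b) :=
  Set.iUnion_Ico_left b ▸ isOpen_iUnion fun a => isOpen_Ico a b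

theorem isClosed_Ico (a b : SorgenfreyLine) : IsClosed (Set.Ico a b) := by
  rw [← isOpen_compl_iff]
  have : (Set.Ico a b)ᶜ = Set.Iio a ∪ Set.Ici b := by
    ext x
    simp only [Set.mem_compl_iff, Set.mem_Ico, Set.mem_union, Set.mem_Iio, Set.mem_Ici,
      not_and_or, not_le, not_lt]
  rw [this]
  exact (isOpen_Iio a).union (isOpen_Ici b)

theorem isClopen_Ico (a b : SorgenfreyLine) : IsClopen (Set.Ico a b) :=
  ⟨isClosed_Ico a b, isOpen_Ico a b⟩

theorem nhds_basis_Ico (a : SorgenfreyLine) : (𝓝 a).HasBasis (a < ·) (Set.Ico a ·) := by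
  rw [TopologicalSpace.nhds_generateFrom]
  haveI : Nonempty { x // x ≤ a } := Set.nonempty_Iic_subtype
  have : (⨅ x : { i // i ≤ a }, 𝓟 (Set.Ici ↑x)) = 𝓟 (Set.Ici a) := by
    refine (IsLeast.isGLB ?_).iInf_eq
    exact ⟨⟨⟨a, le_rfl⟩, rfl⟩, forall_mem_range.2 fun b => principal_mono.2 <|
      Set.Ici_subset_Ici.2 b.2⟩
  simp only [mem_setOf_eq, iInf_and, iInf_exists, @iInf_comm _ (_ ∈ _), @iInf_comm _ (Set _),
    iInf_iInf_eq_left, Set.mem_Ico]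
  simp_rw [@iInf_comm _ SorgenfreyLine (_ ≤ _), iInf_subtype', ← Set.Ici_inter_Iio,
    ← inf_principal, ← inf_iInf, ← iInf_inf, this, iInf_subtype]
  suffices (⨅ x ∈ Set.Ioi a, 𝓟 (Set.Iio x)).HasBasis (a < ·) Set.Iio from this.principal_inf _
  refine hasBasis_biInf_principal ?_ Set.nonempty_Ioi
  exact directedOn_iff_directed.2 <| Monotone.directed_ge fun x y hxy ↦ Set.Iio_subset_Iio hxy

theorem exists_Ico_subset {x : SorgenfreyLine} {U : Set SorgenfreyLine} (h : U ∈ 𝓝 x) :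
    ∃ ε > (0 : SorgenfreyLine), Set.Ico x (x + ε) ⊆ U := by
  rcases (nhds_basis_Ico x).mem_iff.1 h with ⟨y, hy, hsub⟩
  exact ⟨y - x, sub_pos.2 hy, by rwa [add_sub_cancel]⟩

end SLAux
namespace SLAux2
open SLAux

theorem support_witness (n : ℕ) (i : ℤ) :
    Function.support (sorgenfreyWitness n i) =
      Set.Ico (((i : SorgenfreyLine) - 1) / (n + 1)) ((i : SorgenfreyLine) / (n + 1)) := by
  rw [sorgenfreyWitness, Set.support_indicator, Function.support_const one_ne_zero,
    Set.inter_univ]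

theorem closure_support_witness (n : ℕ) (i : ℤ) :
    closure (Function.support (sorgenfreyWitness n i)) =
      Set.Ico (((i : SorgenfreyLine) - 1) / (n + 1)) ((i : SorgenfreyLine) / (n + 1)) := by
  rw [support_witness]
  exact (isClosed_Ico _ _).closure_eq

theorem mem_interval_iff (n : ℕ) (i : ℤ) (x : SorgenfreyLine) :
    x ∈ Set.Ico (((i : SorgenfreyLine) - 1) / (n + 1)) ((i : SorgenfreyLine) / (n + 1)) ↔
      i = ⌊x * ((n : SorgenfreyLine) + 1)⌋ + 1 := by
  have ht : (0 : SorgenfreyLine) < (n : SorgenfreyLine) + 1 := by positivity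
  rw [Set.mem_Ico, div_le_iff₀ ht, lt_div_iff₀ ht]
  constructor
  · rintro ⟨h1, h2⟩
    have : ⌊x * ((n : SorgenfreyLine) + 1)⌋ = i - 1 := by
      rw [Int.floor_eq_iff]
      constructor <;> push_cast <;> linarith
    omega
  · rintro rfl
    have h1 := Int.floor_le (x * ((n : SorgenfreyLine) + 1))
    have h2 := Int.lt_floor_add_one (x * ((n : SorgenfreyLine) + 1))
    constructor <;> push_cast <;> linarith

theorem continuous_witness (n : ℕ) (i : ℤ) : Continuous (sorgenfreyWitness n i) := by
  classical
  rw [sorgenfreyWitness, ← Set.piecewise_eq_indicator]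
  refine Continuous.piecewise ?_ continuous_const continuous_const
  rw [(isClopen_Ico _ _).frontier_eq]
  exact fun a ha => ha.elim

theorem witness_mem_Icc (n : ℕ) (i : ℤ) (x : SorgenfreyLine) :
    sorgenfreyWitness n i x ∈ Set.Icc (0 : ℝ) 1 := by
  rw [sorgenfreyWitness]
  by_cases h : x ∈ Set.Ico (((i : SorgenfreyLine) - 1) / (n + 1)) ((i : SorgenfreyLine) / (n + 1))
  · rw [Set.indicator_of_mem h]; norm_num
  · rw [Set.indicator_of_notMem h]; norm_num

theorem sum_witness (n : ℕ) (x : SorgenfreyLine) : ∑ᶠ i, sorgenfreyWitness n i x = 1 := by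
  simp only [sorgenfreyWitness]
  rw [finsum_eq_single _ (⌊x * ((n : SorgenfreyLine) + 1)⌋ + 1)
    (fun j hj => Set.indicator_of_notMem (fun hm => hj ((mem_interval_iff n j x).1 hm)) _)]
  exact Set.indicator_of_mem ((mem_interval_iff n _ x).2 rfl) _

theorem locallyFinite_witness (n : ℕ) :
    LocallyFinite fun i : ℤ => closure (Function.support (sorgenfreyWitness n i)) := by
  intro x
  have ht : (0 : SorgenfreyLine) < (n : SorgenfreyLine) + 1 := by positivity
  refine ⟨Set.Ico x (x + 1), (isOpen_Ico x (x + 1)).mem_nhds ⟨le_refl x, lt_add_one x⟩, ?_⟩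
  refine Set.Finite.subset (Set.finite_Icc ⌈x * ((n : SorgenfreyLine) + 1)⌉
    (⌊(x + 1) * ((n : SorgenfreyLine) + 1)⌋ + 1)) ?_
  rintro i ⟨y, hyI, hyU⟩
  simp only [closure_support_witness] at hyI
  rw [Set.mem_Ico] at hyI hyU
  have hIl : (i : SorgenfreyLine) - 1 ≤ y * ((n : SorgenfreyLine) + 1) := by
    have := hyI.1; rwa [div_le_iff₀ ht] at this
  have hIr : y * ((n : SorgenfreyLine) + 1) < i := by
    have := hyI.2; rwa [lt_div_iff₀ ht] at this
  have h2' : x * ((n : SorgenfreyLine) + 1) < i := by nlinarith [hyU.1]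
  have h1' : ((i : SorgenfreyLine) - 1) < (x + 1) * ((n : SorgenfreyLine) + 1) := by
    nlinarith [hyU.2]
  constructor
  · exact Int.ceil_le.2 h2'.le
  · have h4 : (i - 1 : ℤ) ≤ ⌊(x + 1) * ((n : SorgenfreyLine) + 1)⌋ := by
      rw [Int.le_floor]; push_cast; linarith [h1']
    omega

end SLAux2
open SLAux SLAux2 in
theorem main_part2 (D : Set SorgenfreyLine) (hD : Dense D) (p : ℕ → ℤ → SorgenfreyLine)
    (hp : ∀ (n : ℕ) (i : ℤ),
      p n i ∈ Set.Ico ((i : SorgenfreyLine) / (n + 1)) (((i : SorgenfreyLine) + 1) / (n + 1))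
        ∧ p n i ∈ D) :
    (∀ n : ℕ, IsLocFinPartitionOfUnity (sorgenfreyWitness n)) ∧
    ∀ x : SorgenfreyLine, ∀ U ∈ nhds x, ∃ n₀ : ℕ, ∀ n ≥ n₀, ∀ i : ℤ,
      x ∈ closure (Function.support (sorgenfreyWitness n i)) → p n i ∈ U := by
  constructor
  · exact fun n => ⟨continuous_witness n, witness_mem_Icc n, locallyFinite_witness n,
      sum_witness n⟩
  · intro x U hU
    obtain ⟨ε, hε, hsub⟩ := exists_Ico_subset hU
    obtain ⟨m, hm⟩ := exists_nat_ge (2 / ε)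
    refine ⟨m, fun n hn i hx => ?_⟩
    have ht : (0 : SorgenfreyLine) < (n : SorgenfreyLine) + 1 := by positivity
    rw [closure_support_witness, Set.mem_Ico] at hx
    have hp1 := (hp n i).1
    rw [Set.mem_Ico] at hp1
    have hmn : (m : SorgenfreyLine) ≤ (n : SorgenfreyLine) := Nat.cast_le.2 hn
    have h2ε : 2 / ε < (n : SorgenfreyLine) + 1 := by linarith
    have h2 : (2 : SorgenfreyLine) < ((n : SorgenfreyLine) + 1) * ε := by
      have := (div_lt_iff₀ hε).1 h2ε
      linarith
    have h2t : 2 / ((n : SorgenfreyLine) + 1) < ε := by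
      rw [div_lt_iff₀ ht]
      linarith
    have e1 : ((i : SorgenfreyLine) + 1) / ((n : SorgenfreyLine) + 1)
        = ((i : SorgenfreyLine) - 1) / ((n : SorgenfreyLine) + 1)
          + 2 / ((n : SorgenfreyLine) + 1) := by
      ring
    refine hsub ⟨?_, ?_⟩
    · exact le_trans (le_of_lt (lt_of_lt_of_le hx.2 hp1.1)) le_rfl
    · have := hp1.2
      rw [e1] at this
      linarith [hx.1]

open SLAux SLAux2 in
theorem main_part1 : IsStrongPPSpace.{u} SorgenfreyLine := by
  intro D hD
  have hnon : ∀ (n : ℕ) (i : ℤ),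
      (Set.Ico ((i : SorgenfreyLine) / (n + 1)) (((i : SorgenfreyLine) + 1) / (n + 1))
        ∩ D).Nonempty := by
    intro n i
    have ht : (0 : SorgenfreyLine) < (n : SorgenfreyLine) + 1 := by positivity
    refine hD.inter_open_nonempty _ (isOpen_Ico _ _) ?_
    refine Set.nonempty_Ico.2 ?_
    rw [div_lt_div_iff₀ ht ht]
    nlinarith
  set p : ℕ → ℤ → SorgenfreyLine := fun n i => (hnon n i).choose with hpdef
  have hp : ∀ (n : ℕ) (i : ℤ),
      p n i ∈ Set.Ico ((i : SorgenfreyLine) / (n + 1)) (((i : SorgenfreyLine) + 1) / (n + 1))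
        ∧ p n i ∈ D := fun n i => ⟨(hnon n i).choose_spec.1, (hnon n i).choose_spec.2⟩
  obtain ⟨hA, hB⟩ := main_part2 D hD p hp
  refine ⟨fun _ => ULift.{u} ℤ, fun n i => sorgenfreyWitness n i.down,
    fun n i => p n i.down, fun n => ?_, fun n i => (hp n i.down).2, ?_⟩
  · obtain ⟨hc, hv, hl, hs⟩ := hA n
    refine ⟨fun i => hc i.down, fun i => hv i.down, ?_, fun x => ?_⟩
    · exact (hl).comp_injective ULift.down_injective
    · exact (finsum_eq_of_bijective (g := fun i : ℤ => sorgenfreyWitness n i x)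
        ULift.down Equiv.ulift.bijective fun _ => rfl).trans (hs x)
  · intro x U hU
    obtain ⟨n₀, hn₀⟩ := hB x U hU
    exact ⟨n₀, fun n hn i hx => hn₀ n hn i.down hx⟩


/-- The Sorgenfrey line is a strong PP-space; moreover, for every dense `D` a
witness is given by the characteristic functions `φ_{i,n}` of the intervals
`[(i-1)/n, i/n)`, `i ∈ ℤ`, together with any points `x_{i,n} ∈ [i/n, (i+1)/n) ∩ D`. -/
theorem sorgenfreyLine_isStrongPPSpace :
    IsStrongPPSpace.{u} SorgenfreyLine ∧
    ∀ D : Set SorgenfreyLine, Dense D →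
      ∀ p : ℕ → ℤ → SorgenfreyLine,
        (∀ (n : ℕ) (i : ℤ),
          p n i ∈ Set.Ico ((i : SorgenfreyLine) / (n + 1)) (((i : SorgenfreyLine) + 1) / (n + 1))
            ∧ p n i ∈ D) →
        (∀ n : ℕ, IsLocFinPartitionOfUnity (sorgenfreyWitness n)) ∧
        ∀ x : SorgenfreyLine, ∀ U ∈ nhds x, ∃ n₀ : ℕ, ∀ n ≥ n₀, ∀ i : ℤ,
          x ∈ closure (Function.support (sorgenfreyWitness n i)) → p n i ∈ U := by
  exact ⟨main_part1, main_part2⟩
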